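/- and Let n ≥ 1, let G be a group and let Γ₀, Γ₁, …, Γₙ ∈ G satisfy [Γᵢ,Γⱼ] = 1 for all 1 ≤ i,j ≤ n. Then the following are equivalent: (i) [M_ε⁻¹Γ₀M_ε, M_{ε'}⁻¹Γ₀M_{ε'}] = 1 for all ε, ε' ∈ {−1,1}ⁿ with H_ε ∩ H_{ε'} ∩ ℝⁿ_{>0} ≠ ∅; (ii) [M(I)⁻¹Γ₀M(I), M(J)⁻¹Γ₀M(J)] = 1 for all subsets I, J ⊆ {1,…,n} with I ∩ J = ∅, I ≠ ∅, J ≠ ∅ and #I + #J ≤ n − 1. -/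

import Mathlib

open scoped BigOperators
open scoped commutatorElement

/-- For commuting group elements `Γ₁, …, Γₙ` (packaged with `Γ₀` as
`Γ : Fin (n+1) → G`) and `I ⊆ {1,…,n}`, the product `M(I) = ∏_{i ∈ I} Γᵢ`
taken in increasing order of indices. -/
def Mprod {n : ℕ} {G : Type*} [Group G] (Γ : Fin (n + 1) → G) (I : Finset (Fin n)) : G :=
  ((I.sort (· ≤ ·)).map fun i => Γ i.succ).prod

/-- `S(ε) = {i : εᵢ = -1}` for a sign vector `ε ∈ {-1,1}ⁿ`. -/
noncomputable def Sneg {n : ℕ} (ε : Fin n → ℝ) : Finset (Fin n) :=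
  Finset.univ.filter fun i => ε i = -1

lemma Mprod_eq_noncommProd {n : ℕ} {G : Type*} [Group G] (Γ : Fin (n + 1) → G)
    (hcomm : ∀ i j : Fin n, Γ i.succ * Γ j.succ = Γ j.succ * Γ i.succ)
    (I : Finset (Fin n)) :
    Mprod Γ I = I.noncommProd (fun i => Γ i.succ)
      (fun a _ b _ _ => hcomm a b) := by
  rw [Mprod]; unfold Finset.noncommProd
  have h1 : Multiset.map (fun i => Γ i.succ) I.val
      = ((I.sort (· ≤ ·)).map fun i => Γ i.succ : List G) := by
    rw [← Finset.sort_eq I (· ≤ ·), Multiset.map_coe]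
  simp only [h1, Multiset.noncommProd_coe]

lemma Mprod_union {n : ℕ} {G : Type*} [Group G] (Γ : Fin (n + 1) → G)
    (hcomm : ∀ i j : Fin n, Γ i.succ * Γ j.succ = Γ j.succ * Γ i.succ)
    {I J : Finset (Fin n)} (h : Disjoint I J) :
    Mprod Γ (I ∪ J) = Mprod Γ I * Mprod Γ J := by
  simp only [Mprod_eq_noncommProd Γ hcomm]
  exact Finset.noncommProd_union_of_disjoint h _ _

lemma conj_comm_rel {G : Type*} [Group G] (a b g : G) (h : ⁅a, b⁆ = 1) :
    ⁅g⁻¹ * a * g, g⁻¹ * b * g⁆ = 1 := by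
  rw [commutatorElement_eq_one_iff_mul_comm] at h ⊢
  calc (g⁻¹ * a * g) * (g⁻¹ * b * g) = g⁻¹ * (a * b) * g := by group
    _ = g⁻¹ * (b * a) * g := by rw [h]
    _ = (g⁻¹ * b * g) * (g⁻¹ * a * g) := by group

lemma sum_sign_eq_one {n : ℕ} (I J : Finset (Fin n)) (hd : Disjoint I J)
    (hI : I.Nonempty) (hJ : J.Nonempty)
    (x : Fin n → ℝ)
    (hxI : ∀ i ∈ I, x i = (I.card : ℝ)⁻¹)
    (hxJ : ∀ i ∈ J, x i = (J.card : ℝ)⁻¹)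
    (hxR : ∀ i ∈ Finset.univ \ (I ∪ J), x i = ((Finset.univ \ (I ∪ J)).card : ℝ)⁻¹)
    (hR : (Finset.univ \ (I ∪ J)).Nonempty) :
    ∑ i, (if i ∈ I then (-1 : ℝ) else 1) * x i = 1 := by
  classical
  set R := Finset.univ \ (I ∪ J) with hRdef
  have hsplit : (Finset.univ : Finset (Fin n)) = (I ∪ J) ∪ R := by
    rw [hRdef, Finset.union_sdiff_of_subset (Finset.subset_univ _)]
  have hdisj2 : Disjoint (I ∪ J) R := Finset.disjoint_sdiff
  rw [hsplit, Finset.sum_union hdisj2, Finset.sum_union hd]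
  have e1 : ∑ i ∈ I, (if i ∈ I then (-1 : ℝ) else 1) * x i = -1 := by
    rw [Finset.sum_congr rfl (fun i hi => by rw [if_pos hi, hxI i hi])]
    rw [Finset.sum_const, nsmul_eq_mul]
    have : (I.card : ℝ) ≠ 0 := Nat.cast_ne_zero.mpr (Finset.card_ne_zero_of_mem hI.choose_spec)
    field_simp
  have e2 : ∑ i ∈ J, (if i ∈ I then (-1 : ℝ) else 1) * x i = 1 := by
    rw [Finset.sum_congr rfl (fun i hi => by
      rw [if_neg (Finset.disjoint_right.mp hd hi), hxJ i hi, one_mul])]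
    rw [Finset.sum_const, nsmul_eq_mul]
    have : (J.card : ℝ) ≠ 0 := Nat.cast_ne_zero.mpr (Finset.card_ne_zero_of_mem hJ.choose_spec)
    field_simp
  have e3 : ∑ i ∈ R, (if i ∈ I then (-1 : ℝ) else 1) * x i = 1 := by
    rw [Finset.sum_congr rfl (fun i hi => by
      have hiI : i ∉ I := fun h => (Finset.mem_sdiff.mp hi).2 (Finset.mem_union_left _ h)
      rw [if_neg hiI, hxR i hi, one_mul])]
    rw [Finset.sum_const, nsmul_eq_mul]
    have : (R.card : ℝ) ≠ 0 := Nat.cast_ne_zero.mpr (Finset.card_ne_zero_of_mem hR.choose_spec)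
    field_simp
  rw [e1, e2, e3]; ring

lemma Sneg_subset_antisymm {n : ℕ} (ε ε' : Fin n → ℝ)
    (hε : ∀ i, ε i = 1 ∨ ε i = -1) (hε' : ∀ i, ε' i = 1 ∨ ε' i = -1)
    (x : Fin n → ℝ) (hx : ∀ l, 0 < x l)
    (hsum : ∑ i, ε i * x i = 1) (hsum' : ∑ i, ε' i * x i = 1)
    (hss : Sneg ε ⊆ Sneg ε') : Sneg ε' ⊆ Sneg ε := by
  classical
  intro j hj
  by_contra hjS
  have hmem : ∀ i, i ∈ Sneg ε ↔ ε i = -1 := fun i => by simp [Sneg]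
  have hmem' : ∀ i, i ∈ Sneg ε' ↔ ε' i = -1 := fun i => by simp [Sneg]
  have key : ∑ i, (ε i - ε' i) * x i = 0 := by
    have : ∀ i ∈ Finset.univ, (ε i - ε' i) * x i = ε i * x i - ε' i * x i :=
      fun i _ => by ring
    rw [Finset.sum_congr rfl this, Finset.sum_sub_distrib, hsum, hsum']; ring
  have nonneg : ∀ i, 0 ≤ (ε i - ε' i) * x i := by
    intro i
    rcases hε i with h1 | h1
    · have : ε' i ≤ 1 := by rcases hε' i with h2 | h2 <;> rw [h2] <;> norm_num
      have := (hx i).le; nlinarith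
    · have hiS : i ∈ Sneg ε := (hmem i).mpr h1
      have hiS' := hss hiS
      rw [h1, (hmem' i).mp hiS']; ring_nf; exact le_refl 0
  have hεj : ε j = 1 := by
    rcases hε j with h | h
    · exact h
    · exact absurd ((hmem j).mpr h) hjS
  have hε'j : ε' j = -1 := (hmem' j).mp hj
  have pos : 0 < (ε j - ε' j) * x j := by rw [hεj, hε'j]; have := hx j; nlinarith
  have : 0 < ∑ i, (ε i - ε' i) * x i :=
    Finset.sum_pos' (fun i _ => nonneg i) ⟨j, Finset.mem_univ j, pos⟩
  linarith [key, this]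

/-- Let `Γ₀, Γ₁, …, Γₙ` be elements of a group `G` with `[Γᵢ, Γⱼ] = 1` for
`1 ≤ i, j ≤ n`.  Then the relations `[M_ε⁻¹Γ₀M_ε, M_{ε'}⁻¹Γ₀M_{ε'}] = 1` for all
`ε, ε' ∈ {-1,1}ⁿ` with `H_ε ∩ H_{ε'} ∩ ℝⁿ_{>0} ≠ ∅` are equivalent to the relations
`[M(I)⁻¹Γ₀M(I), M(J)⁻¹Γ₀M(J)] = 1` for all disjoint nonempty `I, J ⊆ {1,…,n}` with
`#I + #J ≤ n - 1`, where `M_ε = M(S(ε))`. -/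
theorem commutation_relations_equivalent (n : ℕ) (hn : 1 ≤ n)
    (G : Type*) [Group G] (Γ : Fin (n + 1) → G)
    (hcomm : ∀ i j : Fin n, Γ i.succ * Γ j.succ = Γ j.succ * Γ i.succ) :
    (∀ ε ε' : Fin n → ℝ, (∀ i, ε i = 1 ∨ ε i = -1) → (∀ i, ε' i = 1 ∨ ε' i = -1) →
        (∃ x : Fin n → ℝ, (∀ l, 0 < x l) ∧ ∑ i, ε i * x i = 1 ∧ ∑ i, ε' i * x i = 1) →
        ⁅(Mprod Γ (Sneg ε))⁻¹ * Γ 0 * Mprod Γ (Sneg ε),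
          (Mprod Γ (Sneg ε'))⁻¹ * Γ 0 * Mprod Γ (Sneg ε')⁆ = 1) ↔
      ∀ I J : Finset (Fin n), I ∩ J = ∅ → I ≠ ∅ → J ≠ ∅ → I.card + J.card ≤ n - 1 →
        ⁅(Mprod Γ I)⁻¹ * Γ 0 * Mprod Γ I, (Mprod Γ J)⁻¹ * Γ 0 * Mprod Γ J⁆ = 1 := by
  classical
  constructor
  · -- (i) → (ii)
    intro h1 I J hIJ hIne hJne hcard
    have hd : Disjoint I J := Finset.disjoint_iff_inter_eq_empty.mpr hIJ
    have hI : I.Nonempty := Finset.nonempty_iff_ne_empty.mpr hIne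
    have hJ : J.Nonempty := Finset.nonempty_iff_ne_empty.mpr hJne
    set R := Finset.univ \ (I ∪ J) with hRdef
    have hcardU : (I ∪ J).card = I.card + J.card := Finset.card_union_of_disjoint hd
    have hRcard : 1 ≤ R.card := by
      rw [hRdef, Finset.card_sdiff_of_subset (Finset.subset_univ _), Finset.card_univ,
        Fintype.card_fin, hcardU]
      omega
    have hR : R.Nonempty := Finset.card_pos.mp hRcard
    set ε : Fin n → ℝ := fun i => if i ∈ I then -1 else 1 with hεdef
    set ε' : Fin n → ℝ := fun i => if i ∈ J then -1 else 1 with hε'def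
    have hSI : Sneg ε = I := by
      ext i
      by_cases hi : i ∈ I <;> simp [Sneg, hεdef, hi] <;> norm_num
    have hSJ : Sneg ε' = J := by
      ext i
      by_cases hi : i ∈ J <;> simp [Sneg, hε'def, hi] <;> norm_num
    set x : Fin n → ℝ := fun i =>
      if i ∈ I then (I.card : ℝ)⁻¹ else if i ∈ J then (J.card : ℝ)⁻¹ else (R.card : ℝ)⁻¹
      with hxdef
    have hIc : (0 : ℝ) < (I.card : ℝ) := by
      exact_mod_cast Finset.card_pos.mpr hI
    have hJc : (0 : ℝ) < (J.card : ℝ) := by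
      exact_mod_cast Finset.card_pos.mpr hJ
    have hRc : (0 : ℝ) < (R.card : ℝ) := by exact_mod_cast Finset.card_pos.mpr hR
    have hxpos : ∀ l, 0 < x l := by
      intro l
      rw [hxdef]
      dsimp only
      split_ifs <;> positivity
    have hxI : ∀ i ∈ I, x i = (I.card : ℝ)⁻¹ := fun i hi => by simp [hxdef, hi]
    have hxJ : ∀ i ∈ J, x i = (J.card : ℝ)⁻¹ := fun i hi => by
      simp [hxdef, hi, Finset.disjoint_right.mp hd hi]
    have hxR : ∀ i ∈ R, x i = (R.card : ℝ)⁻¹ := fun i hi => by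
      have h2 := (Finset.mem_sdiff.mp hi).2
      simp only [Finset.mem_union] at h2
      push_neg at h2
      simp [hxdef, h2.1, h2.2]
    have hsum : ∑ i, ε i * x i = 1 :=
      sum_sign_eq_one I J hd hI hJ x hxI hxJ hxR hR
    have hsum' : ∑ i, ε' i * x i = 1 := by
      have := sum_sign_eq_one J I hd.symm hJ hI x hxJ hxI
        (by rw [Finset.union_comm]; exact hxR) (by rw [Finset.union_comm]; exact hR)
      exact this
    have := h1 ε ε' (fun i => by rw [hεdef]; dsimp only; split_ifs <;> simp)
      (fun i => by rw [hε'def]; dsimp only; split_ifs <;> simp)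
      ⟨x, hxpos, hsum, hsum'⟩
    rwa [hSI, hSJ] at this
  · -- (ii) → (i)
    intro h2 ε ε' hε hε' ⟨x, hx, hsum, hsum'⟩
    set S := Sneg ε with hSdef
    set S' := Sneg ε' with hS'def
    by_cases hSS : S = S'
    · rw [hSS]; exact commutatorElement_self _
    have hmem : ∀ i, i ∈ S ↔ ε i = -1 := fun i => by simp [hSdef, Sneg]
    have hmem' : ∀ i, i ∈ S' ↔ ε' i = -1 := fun i => by simp [hS'def, Sneg]
    -- S ∪ S' is a proper subset of univ
    have hsum2 : ∑ i, (ε i + ε' i) * x i = 2 := by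
      have : ∀ i ∈ Finset.univ, (ε i + ε' i) * x i = ε i * x i + ε' i * x i :=
        fun i _ => by ring
      rw [Finset.sum_congr rfl this, Finset.sum_add_distrib, hsum, hsum']; norm_num
    have hproper : S ∪ S' ≠ Finset.univ := by
      intro hu
      have hle : ∀ i : Fin n, (ε i + ε' i) * x i ≤ 0 := by
        intro i
        have hi : i ∈ S ∪ S' := hu ▸ Finset.mem_univ i
        have hcase : ε i = -1 ∨ ε' i = -1 := by
          rcases Finset.mem_union.mp hi with h | h
          · exact Or.inl ((hmem i).mp h)
          · exact Or.inr ((hmem' i).mp h)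
        have hb : ε i ≤ 1 := by rcases hε i with h | h <;> rw [h] <;> norm_num
        have hb' : ε' i ≤ 1 := by rcases hε' i with h | h <;> rw [h] <;> norm_num
        have hxi := (hx i).le
        rcases hcase with h | h <;> nlinarith
      have := Finset.sum_nonpos (fun i (_ : i ∈ Finset.univ) => hle i)
      linarith [hsum2, this]
    -- the pieces
    set T := S ∩ S' with hTdef
    set I := S \ S' with hIdef
    set J := S' \ S with hJdef
    have hIne : I ≠ ∅ := by
      intro h
      have hss : S ⊆ S' := by
        intro a ha
        by_contra hb
        exact (Finset.eq_empty_iff_forall_notMem.mp h a)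
          (Finset.mem_sdiff.mpr ⟨ha, hb⟩)
      exact hSS (Finset.Subset.antisymm hss
        (Sneg_subset_antisymm ε ε' hε hε' x hx hsum hsum' hss))
    have hJne : J ≠ ∅ := by
      intro h
      have hss : S' ⊆ S := by
        intro a ha
        by_contra hb
        exact (Finset.eq_empty_iff_forall_notMem.mp h a)
          (Finset.mem_sdiff.mpr ⟨ha, hb⟩)
      exact hSS (Finset.Subset.antisymm
        (Sneg_subset_antisymm ε' ε hε' hε x hx hsum' hsum hss) hss)
    have hdIJ : Disjoint I J := by
      rw [Finset.disjoint_left]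
      intro a haI haJ
      exact (Finset.mem_sdiff.mp haI).2 (Finset.mem_sdiff.mp haJ).1
    have hcard : I.card + J.card ≤ n - 1 := by
      have hsub : I ∪ J ⊆ S ∪ S' :=
        Finset.union_subset_union Finset.sdiff_subset Finset.sdiff_subset
      have hlt : (S ∪ S').card < n := by
        have : (S ∪ S') ⊂ Finset.univ :=
          (Finset.subset_univ _).ssubset_of_ne hproper
        have := Finset.card_lt_card this
        rwa [Finset.card_univ, Fintype.card_fin] at this
      have h1 : (I ∪ J).card ≤ (S ∪ S').card := Finset.card_le_card hsub
      have h2 : (I ∪ J).card = I.card + J.card := Finset.card_union_of_disjoint hdIJ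
      omega
    have hrel := h2 I J (Finset.disjoint_iff_inter_eq_empty.mp hdIJ) hIne hJne hcard
    have hS : S = I ∪ T := (Finset.sdiff_union_inter S S').symm
    have hS' : S' = J ∪ T := by
      rw [hTdef, Finset.inter_comm]
      exact (Finset.sdiff_union_inter S' S).symm
    have hdIT : Disjoint I T := Finset.disjoint_sdiff_inter S S'
    have hdJT : Disjoint J T := by
      rw [hTdef, Finset.inter_comm]
      exact Finset.disjoint_sdiff_inter S' S
    have eS : (Mprod Γ S)⁻¹ * Γ 0 * Mprod Γ S
        = (Mprod Γ T)⁻¹ * ((Mprod Γ I)⁻¹ * Γ 0 * Mprod Γ I) * Mprod Γ T := by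
      rw [hS, Mprod_union Γ hcomm hdIT]; group
    have eS' : (Mprod Γ S')⁻¹ * Γ 0 * Mprod Γ S'
        = (Mprod Γ T)⁻¹ * ((Mprod Γ J)⁻¹ * Γ 0 * Mprod Γ J) * Mprod Γ T := by
      rw [hS', Mprod_union Γ hcomm hdJT]; group
    rw [eS, eS']
    exact conj_comm_rel _ _ _ hrel
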